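/- Let C be an alternating bilinear form on V. If k₁ + k₂ + k₃ = 0, then the gauge-fixing cochain is (minus) the cyclic sum of C evaluated on Lie brackets: −v₃^C((ξ₁,k₁),(ξ₂,k₂),(ξ₃,k₃)) = C([ξ₁,ξ₂],ξ₃) + C([ξ₃,ξ₁],ξ₂) + C([ξ₂,ξ₃],ξ₁). -/

import Mathlib

namespace Stmt4

variable {V : Type*} [AddCommGroup V] [Module ℝ V]

/-- The momentum-space Lie bracket of modes. -/
def lieMode (B : LinearMap.BilinForm ℝ V) (p q : V × V) : V × V :=
  (B p.1 q.2 • q.1 - B q.1 p.2 • p.1, p.2 + q.2)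

/-- The gauge-fixing cochain `v₃^C` associated to an alternating bilinear form `C`:
`v₃^C = C(ξ₁,ξ₂)(k₃·ξ₃) + C(ξ₂,ξ₃)(k₁·ξ₁) + C(ξ₃,ξ₁)(k₂·ξ₂)`. -/
def v₃C (B C : LinearMap.BilinForm ℝ V) (p q r : V × V) : ℝ :=
  C p.1 q.1 * B r.2 r.1 + C q.1 r.1 * B p.2 p.1 + C r.1 p.1 * B q.2 q.1

/-- If `k₁ + k₂ + k₃ = 0`, then
`−v₃^C = C([ξ₁,ξ₂],ξ₃) + C([ξ₃,ξ₁],ξ₂) + C([ξ₂,ξ₃],ξ₁)`. -/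
theorem v₃C_eq_cyclic_sum (B : LinearMap.BilinForm ℝ V) (hB : B.IsSymm)
    (C : LinearMap.BilinForm ℝ V) (hC : C.IsAlt)
    (ξ₁ k₁ ξ₂ k₂ ξ₃ k₃ : V) (h : k₁ + k₂ + k₃ = 0) :
    -v₃C B C (ξ₁, k₁) (ξ₂, k₂) (ξ₃, k₃)
      = C (lieMode B (ξ₁, k₁) (ξ₂, k₂)).1 ξ₃
        + C (lieMode B (ξ₃, k₃) (ξ₁, k₁)).1 ξ₂
        + C (lieMode B (ξ₂, k₂) (ξ₃, k₃)).1 ξ₁ := by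
  have hk3 : k₃ = -(k₁ + k₂) := by
    rw [eq_neg_iff_add_eq_zero, add_comm]; exact h
  subst hk3
  simp only [lieMode, v₃C, map_add, map_neg, map_sub, map_smul, LinearMap.add_apply,
    LinearMap.neg_apply, LinearMap.sub_apply, LinearMap.smul_apply, smul_eq_mul]
  have s12 := hB.eq ξ₁ k₂; have s21 := hB.eq ξ₂ k₁
  have s11 := hB.eq ξ₁ k₁; have s22 := hB.eq ξ₂ k₂
  have s31 := hB.eq ξ₃ k₁; have s32 := hB.eq ξ₃ k₂
  have c13 := hC.neg_eq ξ₁ ξ₃; have c23 := hC.neg_eq ξ₂ ξ₃; have c12 := hC.neg_eq ξ₁ ξ₂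
  rw [s12, s21, s11, s22, s31, s32]
  linear_combination (-(B k₁ ξ₂)) * c13 + (B k₁ ξ₁ + B k₂ ξ₁) * c23 + (-(B k₂ ξ₃)) * c12
end Stmt4
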